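/- Let A and B be C*-algebras with A unital, and let S : A → B be a linear map satisfying: for all a, b ∈ A, if a b* = b* a = 1 then S(a) S(b)* = S(b)* S(a) = S(1). Then S is a Jordan *-homomorphism, that is, S(a*) = S(a)* and S(a²) = S(a)² for every a ∈ A. -/

import Mathlib

open Filter Topology

/-- In a non-unital C⋆-algebra, if a sum of two positive elements is zero, each is zero. -/
private lemma aux_sum_zero {B : Type*} [NonUnitalCStarAlgebra B] {c d : B}
    (hsum : c * star c + d * star d = 0) : c = 0 := by
  letI := CStarAlgebra.spectralOrder (Unitization ℂ B)
  haveI := CStarAlgebra.spectralOrderedRing (Unitization ℂ B)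
  have h1 : (0 : Unitization ℂ B) ≤ (c : Unitization ℂ B) * star (c : Unitization ℂ B) :=
    mul_star_self_nonneg _
  have h2 : (0 : Unitization ℂ B) ≤ (d : Unitization ℂ B) * star (d : Unitization ℂ B) :=
    mul_star_self_nonneg _
  have h3 : (c : Unitization ℂ B) * star (c : Unitization ℂ B)
      + (d : Unitization ℂ B) * star (d : Unitization ℂ B) = 0 := by
    have := congrArg (fun y : B => (y : Unitization ℂ B)) hsum
    simpa [Unitization.inr_mul, Unitization.inr_star] using this
  have h4 : (c : Unitization ℂ B) * star (c : Unitization ℂ B) = 0 := by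
    refine le_antisymm ?_ h1
    have he : (c : Unitization ℂ B) * star (c : Unitization ℂ B)
        = -((d : Unitization ℂ B) * star (d : Unitization ℂ B)) :=
      eq_neg_of_add_eq_zero_left h3
    rw [he]
    exact neg_nonpos.mpr h2
  have h5 : c * star c = 0 := by
    have he : ((c * star c : B) : Unitization ℂ B) = ((0 : B) : Unitization ℂ B) := by
      simpa [Unitization.inr_mul, Unitization.inr_star] using h4
    exact Unitization.inr_injective he
  exact (CStarRing.mul_star_self_eq_zero_iff c).mp h5

/-- Existence of a commuting square root of `1 - x ^ 2` for a selfadjoint contraction. -/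
private lemma aux_sqrt {A : Type*} [CStarAlgebra A] [Nontrivial A] (x : A)
    (hx : IsSelfAdjoint x) (hnorm : ‖x‖ ≤ 1) :
    ∃ y : A, IsSelfAdjoint y ∧ x * y = y * x ∧ x * x + y * y = 1 := by
  set f : ℝ → ℝ := fun t => Real.sqrt (1 - t ^ 2) with hf
  refine ⟨cfc f x, cfc_predicate _ x, ?_, ?_⟩
  · have h1 := cfc_mul (R := ℝ) (fun t => t) f x (by fun_prop) (by fun_prop)
    have h2 := cfc_mul (R := ℝ) f (fun t => t) x (by fun_prop) (by fun_prop)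
    have h3 : cfc (fun t : ℝ => t) x = x := cfc_id' ℝ x
    rw [h3] at h1 h2
    rw [← h1, ← h2]
    congr 1
    ext t
    exact mul_comm _ _
  · have hspec : ∀ t ∈ spectrum ℝ x, 0 ≤ 1 - t ^ 2 := by
      intro t ht
      have h0 := spectrum.norm_le_norm_of_mem ht
      have habs : |t| ≤ 1 := le_trans (by simpa using h0) hnorm
      nlinarith [abs_nonneg t, sq_abs t]
    have h1 := cfc_mul (R := ℝ) (fun t => t) (fun t => t) x (by fun_prop) (by fun_prop)
    have h2 := cfc_mul (R := ℝ) f f x (by fun_prop) (by fun_prop)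
    have h3 : cfc (fun t : ℝ => t) x = x := cfc_id' ℝ x
    rw [h3] at h1
    rw [← h1, ← h2, ← cfc_add x _ _ (by fun_prop) (by fun_prop)]
    calc cfc (fun t : ℝ => t * t + f t * f t) x = cfc (fun _ : ℝ => (1 : ℝ)) x := by
          apply cfc_congr
          intro t ht
          have h0 := hspec t ht
          simp only [hf]
          rw [Real.mul_self_sqrt h0]
          ring
      _ = 1 := cfc_const_one ℝ x

/-- A function continuous at `0` vanishing on a punctured neighborhood vanishes at `0`. -/
private lemma aux_limit {β : Type*} [NormedAddCommGroup β] {G : ℝ → β}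
    (hG : ContinuousAt G 0) {ε : ℝ} (hε : 0 < ε)
    (hz : ∀ t : ℝ, |t| < ε → t ≠ 0 → G t = 0) : G 0 = 0 := by
  have h1 : Tendsto G (𝓝[≠] (0 : ℝ)) (𝓝 (G 0)) := hG.tendsto.mono_left nhdsWithin_le_nhds
  have h2 : G =ᶠ[𝓝[≠] (0 : ℝ)] fun _ => 0 := by
    have hball : ∀ᶠ t : ℝ in 𝓝 0, |t| < ε := by
      filter_upwards [Metric.ball_mem_nhds (0 : ℝ) hε] with t ht
      simpa [Real.dist_eq] using ht
    filter_upwards [hball.filter_mono nhdsWithin_le_nhds, self_mem_nhdsWithin] with t ht ht0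
    exact hz t ht ht0
  exact tendsto_nhds_unique (h1.congr' h2) tendsto_const_nhds

set_option maxHeartbeats 1000000 in
theorem stmt11 {A B : Type*}
    [NormedRing A] [StarRing A] [CStarRing A] [CompleteSpace A]
    [NormedAlgebra ℂ A] [StarModule ℂ A]
    [NonUnitalNormedRing B] [StarRing B] [CStarRing B] [CompleteSpace B]
    [NormedSpace ℂ B] [IsScalarTower ℂ B B] [SMulCommClass ℂ B B] [StarModule ℂ B]
    (S : A →ₗ[ℂ] B)
    (h : ∀ a b : A, a * star b = 1 → star b * a = 1 →
      S a * star (S b) = S 1 ∧ star (S b) * S a = S 1) :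
    (∀ a : A, S (star a) = star (S a)) ∧ (∀ a : A, S (a * a) = S a * S a) := by
  rcases subsingleton_or_nontrivial A with hA | hA
  · constructor <;> intro a
    · rw [Subsingleton.elim (star a) (0 : A), Subsingleton.elim a (0 : A), map_zero,
        star_zero]
    · rw [Subsingleton.elim (a * a) (0 : A), Subsingleton.elim a (0 : A), map_zero,
        mul_zero]
  letI : CStarAlgebra A := { }
  letI : NonUnitalCStarAlgebra B := { }
  set p : B := S 1 with hp_def
  obtain ⟨hp1, hp2⟩ := h 1 1 (by simp) (by simp)
  rw [← hp_def] at hp1 hp2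
  have hpstar : star p = p := by
    have h1 := congrArg star hp1
    rw [star_mul, star_star] at h1
    rw [← h1, hp1]
  have hpp : p * p = p := by nth_rewrite 2 [← hpstar]; exact hp1
  have hpnorm : ‖p‖ ≤ 1 := by
    have h1 : ‖p‖ * ‖p‖ = ‖p‖ := by
      rw [← CStarRing.norm_self_mul_star (x := p), hpstar, hpp]
    nlinarith [norm_nonneg p]
  -- norm bound on images of "unitaries"
  have hub : ∀ u : A, u * star u = 1 → star u * u = 1 → ‖S u‖ ≤ 1 := by
    intro u h1 h2
    obtain ⟨k1, _⟩ := h u u h1 h2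
    have h3 : ‖S u‖ * ‖S u‖ = ‖p‖ := by
      rw [← CStarRing.norm_self_mul_star (x := S u), k1, hp_def]
    nlinarith [norm_nonneg (S u), hpnorm]
  -- key facts for selfadjoint contractions
  have hkey : ∀ x : A, IsSelfAdjoint x → ‖x‖ ≤ 1 →
      (p * S x = S x ∧ S x * p = S x ∧ ‖S x‖ ≤ 1) := by
    intro x hx hxn
    obtain ⟨y, hy, hxy, hsq⟩ := aux_sqrt x hx hxn
    set u : A := x + Complex.I • y with hu_def
    have hsu : star u = x - Complex.I • y := by
      rw [hu_def, star_add, star_smul, hx.star_eq, hy.star_eq, Complex.star_def,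
        Complex.conj_I, neg_smul, ← sub_eq_add_neg]
    have huu : u * star u = 1 := by
      rw [hsu, hu_def]
      have hexp : (x + Complex.I • y) * (x - Complex.I • y)
          = (x * x + y * y) + Complex.I • (y * x - x * y) := by
        simp only [mul_sub, add_mul, sub_mul, mul_add, smul_mul_assoc, mul_smul_comm,
          smul_smul, Complex.I_mul_I, neg_smul, one_smul, smul_sub, smul_add, neg_one_smul]
        module
      rw [hexp, hxy, sub_self, smul_zero, add_zero, hsq]
    have huu' : star u * u = 1 := by
      rw [hsu, hu_def]
      have hexp : (x - Complex.I • y) * (x + Complex.I • y)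
          = (x * x + y * y) + Complex.I • (x * y - y * x) := by
        simp only [mul_sub, add_mul, sub_mul, mul_add, smul_mul_assoc, mul_smul_comm,
          smul_smul, Complex.I_mul_I, neg_smul, one_smul, smul_sub, smul_add, neg_one_smul]
        module
      rw [hexp, hxy, sub_self, smul_zero, add_zero, hsq]
    obtain ⟨A1, A2⟩ := h u u huu huu'
    obtain ⟨B1, B2⟩ := h (star u) (star u) (by rwa [star_star]) (by rwa [star_star])
    set c : B := S x with hc_def
    set d : B := S y with hd_def
    have hSu : S u = c + Complex.I • d := by rw [hu_def, map_add, map_smul]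
    have hSu' : S (star u) = c - Complex.I • d := by rw [hsu, map_sub, map_smul]
    have hstarSu : star (S u) = star c - Complex.I • star d := by
      rw [hSu, star_add, star_smul, Complex.star_def, Complex.conj_I, neg_smul,
        ← sub_eq_add_neg]
    have hstarSu' : star (S (star u)) = star c + Complex.I • star d := by
      rw [hSu', star_sub, star_smul, Complex.star_def, Complex.conj_I, neg_smul,
        sub_neg_eq_add]
    have e1 : c * star c + d * star d = p := by
      have hsum : ((c + Complex.I • d) * (star c - Complex.I • star d))
          + ((c - Complex.I • d) * (star c + Complex.I • star d))
          = (c * star c + d * star d) + (c * star c + d * star d) := by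
        simp only [mul_sub, add_mul, sub_mul, mul_add, smul_mul_assoc, mul_smul_comm,
          smul_smul, Complex.I_mul_I, neg_smul, one_smul, smul_sub, smul_add, neg_one_smul]
        module
      rw [hstarSu, hSu] at A1
      rw [hstarSu', hSu'] at B1
      have h2 : (c * star c + d * star d) + (c * star c + d * star d) = p + p := by
        rw [← hsum, A1, B1]
      have h3 : (2 : ℂ) • (c * star c + d * star d) = (2 : ℂ) • p := by
        rw [two_smul, two_smul]; exact h2
      have h4 : ((2 : ℂ)⁻¹ * 2) • (c * star c + d * star d) = ((2 : ℂ)⁻¹ * 2) • p := by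
        rw [← smul_smul, h3, smul_smul]
      rwa [inv_mul_cancel₀ (two_ne_zero), one_smul, one_smul] at h4
    have e2 : star c * c + star d * d = p := by
      have hsum : ((star c - Complex.I • star d) * (c + Complex.I • d))
          + ((star c + Complex.I • star d) * (c - Complex.I • d))
          = (star c * c + star d * d) + (star c * c + star d * d) := by
        simp only [mul_sub, add_mul, sub_mul, mul_add, smul_mul_assoc, mul_smul_comm,
          smul_smul, Complex.I_mul_I, neg_smul, one_smul, smul_sub, smul_add, neg_one_smul]
        module
      rw [hstarSu, hSu] at A2
      rw [hstarSu', hSu'] at B2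
      have h2 : (star c * c + star d * d) + (star c * c + star d * d) = p + p := by
        rw [← hsum, A2, B2]
      have h3 : (2 : ℂ) • (star c * c + star d * d) = (2 : ℂ) • p := by
        rw [two_smul, two_smul]; exact h2
      have h4 : ((2 : ℂ)⁻¹ * 2) • (star c * c + star d * d) = ((2 : ℂ)⁻¹ * 2) • p := by
        rw [← smul_smul, h3, smul_smul]
      rwa [inv_mul_cancel₀ (two_ne_zero), one_smul, one_smul] at h4
    refine ⟨?_, ?_, ?_⟩
    · have hz : (c - p * c) * star (c - p * c) + (d - p * d) * star (d - p * d) = 0 := by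
        calc (c - p * c) * star (c - p * c) + (d - p * d) * star (d - p * d)
            = (c * star c + d * star d) - (c * star c + d * star d) * p
              - p * (c * star c + d * star d) + p * ((c * star c + d * star d) * p) := by
              simp only [star_sub, star_mul, hpstar]
              noncomm_ring
          _ = p - p * p - p * p + p * (p * p) := by rw [e1]
          _ = 0 := by simp only [hpp]; abel
      have h6 := aux_sum_zero hz
      rw [sub_eq_zero] at h6
      exact h6.symm
    · have hz : star (c - c * p) * (c - c * p) + star (d - d * p) * (d - d * p) = 0 := by
        calc star (c - c * p) * (c - c * p) + star (d - d * p) * (d - d * p)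
            = (star c * c + star d * d) - (star c * c + star d * d) * p
              - p * (star c * c + star d * d) + p * ((star c * c + star d * d) * p) := by
              simp only [star_sub, star_mul, hpstar]
              noncomm_ring
          _ = p - p * p - p * p + p * (p * p) := by rw [e2]
          _ = 0 := by simp only [hpp]; abel
      have hz' : (star (c - c * p)) * star (star (c - c * p))
          + (star (d - d * p)) * star (star (d - d * p)) = 0 := by
        rw [star_star, star_star]; exact hz
      have h6 := aux_sum_zero hz'
      rw [star_eq_zero, sub_eq_zero] at h6
      exact h6.symm
    · have hb1 : ‖S u‖ ≤ 1 := hub u huu huu'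
      have hb2 : ‖S (star u)‖ ≤ 1 := hub (star u) (by rwa [star_star]) (by rwa [star_star])
      have hcc : S u + S (star u) = (2 : ℂ) • c := by
        rw [hSu, hSu', two_smul]; abel
      have h4 : ‖(2 : ℂ) • c‖ ≤ 2 := by
        rw [← hcc]
        calc ‖S u + S (star u)‖ ≤ ‖S u‖ + ‖S (star u)‖ := norm_add_le _ _
          _ ≤ 2 := by linarith
      rw [norm_smul] at h4
      have h5 : ‖(2 : ℂ)‖ = 2 := by simp
      rw [h5] at h4
      linarith
  -- all selfadjoints
  have hsa : ∀ x : A, IsSelfAdjoint x →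
      (p * S x = S x ∧ S x * p = S x ∧ ‖S x‖ ≤ ‖x‖) := by
    intro x hx
    rcases eq_or_ne x 0 with rfl | hx0
    · simp
    have hn : (0 : ℝ) < ‖x‖ := norm_pos_iff.mpr hx0
    set r : ℂ := (‖x‖ : ℂ) with hr
    have hr0 : r ≠ 0 := by
      rw [hr]
      exact_mod_cast ne_of_gt hn
    have hx' : IsSelfAdjoint (r⁻¹ • x) := by
      rw [IsSelfAdjoint, star_smul, hx.star_eq, star_inv₀]
      congr 1
      rw [hr, Complex.star_def, Complex.conj_ofReal]
    have hxn' : ‖r⁻¹ • x‖ ≤ 1 := by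
      rw [norm_smul, norm_inv, hr]
      simp only [Complex.norm_real, Real.norm_eq_abs, abs_of_pos hn]
      rw [inv_mul_cancel₀ (ne_of_gt hn)]
    obtain ⟨k1, k2, k3⟩ := hkey _ hx' hxn'
    have hxx : x = r • (r⁻¹ • x) := by rw [smul_smul, mul_inv_cancel₀ hr0, one_smul]
    have hSx : S x = r • S (r⁻¹ • x) := by
      conv_lhs => rw [hxx]
      rw [map_smul]
    have hrn : ‖r‖ = ‖x‖ := by rw [hr]; simp
    refine ⟨?_, ?_, ?_⟩
    · rw [hSx, mul_smul_comm, k1]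
    · rw [hSx, smul_mul_assoc, k2]
    · rw [hSx, norm_smul, hrn]
      nlinarith
  -- projection property for all elements
  have hdec : ∀ a : A, ∃ h₁ k₁ : A, IsSelfAdjoint h₁ ∧ IsSelfAdjoint k₁ ∧
      a = h₁ + Complex.I • k₁ ∧ ‖h₁‖ ≤ ‖a‖ ∧ ‖k₁‖ ≤ ‖a‖ := by
    intro a
    refine ⟨(2 : ℂ)⁻¹ • (a + star a), (-Complex.I * (2 : ℂ)⁻¹) • (a - star a),
      ?_, ?_, ?_, ?_, ?_⟩
    · rw [IsSelfAdjoint, star_smul, star_add, star_star]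
      rw [add_comm (star a) a]
      congr 1
      simp
    · rw [IsSelfAdjoint, star_smul, star_sub, star_star]
      have hs : star (-Complex.I * (2 : ℂ)⁻¹) = Complex.I * (2 : ℂ)⁻¹ := by
        simp [Complex.star_def]
      rw [hs]
      have hss : star a - a = -(a - star a) := (neg_sub _ _).symm
      rw [hss, smul_neg, ← neg_smul, neg_mul]
    · rw [smul_smul]
      have hI : Complex.I * (-Complex.I * (2 : ℂ)⁻¹) = (2 : ℂ)⁻¹ := by
        rw [← mul_assoc, mul_neg, Complex.I_mul_I, neg_neg, one_mul]
      rw [hI]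
      simp only [smul_add, smul_sub]
      module
    · rw [norm_smul]
      have h5 : ‖(2 : ℂ)⁻¹‖ = 2⁻¹ := by simp
      rw [h5]
      have h2 : ‖a + star a‖ ≤ 2 * ‖a‖ := by
        calc ‖a + star a‖ ≤ ‖a‖ + ‖star a‖ := norm_add_le _ _
          _ = 2 * ‖a‖ := by rw [norm_star]; ring
      linarith
    · rw [norm_smul]
      have h5 : ‖(-Complex.I * (2 : ℂ)⁻¹)‖ = 2⁻¹ := by simp
      rw [h5]
      have h2 : ‖a - star a‖ ≤ 2 * ‖a‖ := by
        calc ‖a - star a‖ ≤ ‖a‖ + ‖star a‖ := norm_sub_le _ _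
          _ = 2 * ‖a‖ := by rw [norm_star]; ring
      linarith
  have hproj : ∀ a : A, p * S a = S a ∧ S a * p = S a := by
    intro a
    obtain ⟨h₁, k₁, hh_sa, hk_sa, hdecomp, _, _⟩ := hdec a
    obtain ⟨m1, m2, _⟩ := hsa h₁ hh_sa
    obtain ⟨n1, n2, _⟩ := hsa k₁ hk_sa
    have hSa : S a = S h₁ + Complex.I • S k₁ := by
      rw [hdecomp, map_add, map_smul]
    constructor
    · rw [hSa, mul_add, mul_smul_comm, m1, n1]
    · rw [hSa, add_mul, smul_mul_assoc, m2, n2]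
  -- boundedness and continuity of S
  have hbound : ∀ a : A, ‖S a‖ ≤ 2 * ‖a‖ := by
    intro a
    obtain ⟨h₁, k₁, hh_sa, hk_sa, hdecomp, hn1, hn2⟩ := hdec a
    obtain ⟨_, _, q1⟩ := hsa h₁ hh_sa
    obtain ⟨_, _, q2⟩ := hsa k₁ hk_sa
    have hSa : S a = S h₁ + Complex.I • S k₁ := by
      rw [hdecomp, map_add, map_smul]
    calc ‖S a‖ = ‖S h₁ + Complex.I • S k₁‖ := by rw [hSa]
      _ ≤ ‖S h₁‖ + ‖Complex.I • S k₁‖ := norm_add_le _ _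
      _ = ‖S h₁‖ + ‖S k₁‖ := by rw [norm_smul, Complex.norm_I, one_mul]
      _ ≤ ‖a‖ + ‖a‖ := by
          have := le_trans q1 hn1
          have := le_trans q2 hn2
          linarith
      _ = 2 * ‖a‖ := by ring
  have hcont : Continuous S := (S.mkContinuous 2 hbound).continuous
  -- limit relations
  have hTrel : ∀ x : A, star (S (star x)) * p = p * S x ∧ p * star (S (star x)) = S x * p
      ∧ S (x * x) * p = S x * star (S (star x)) := by
    intro x
    set Tx : B := star (S (star x)) with hTx
    set ε : ℝ := (1 + ‖x‖)⁻¹ with hε_def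
    have hε : 0 < ε := by rw [hε_def]; positivity
    set z : ℝ → A := fun t => Ring.inverse ((1 : A) + ((t : ℝ) : ℂ) • x) with hz_def
    have hunit : ∀ t : ℝ, |t| < ε → IsUnit ((1 : A) + ((t : ℝ) : ℂ) • x) := by
      intro t ht
      have hx1 : (0 : ℝ) < 1 + ‖x‖ := by positivity
      have ht1 : |t| * (1 + ‖x‖) < 1 := by
        rw [hε_def] at ht
        calc |t| * (1 + ‖x‖) < (1 + ‖x‖)⁻¹ * (1 + ‖x‖) := by
              apply mul_lt_mul_of_pos_right ht hx1
          _ = 1 := inv_mul_cancel₀ (ne_of_gt hx1)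
      have hn : ‖-(((t : ℝ) : ℂ) • x)‖ < 1 := by
        rw [norm_neg, norm_smul, Complex.norm_real, Real.norm_eq_abs]
        nlinarith [abs_nonneg t, norm_nonneg x]
      have := isUnit_one_sub_of_norm_lt_one hn
      rwa [sub_neg_eq_add] at this
    have hz_r : ∀ t : ℝ, |t| < ε → ((1 : A) + ((t : ℝ) : ℂ) • x) * z t = 1 := by
      intro t ht
      exact Ring.mul_inverse_cancel _ (hunit t ht)
    have hz_l : ∀ t : ℝ, |t| < ε → z t * ((1 : A) + ((t : ℝ) : ℂ) • x) = 1 := by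
      intro t ht
      exact Ring.inverse_mul_cancel _ (hunit t ht)
    have hz0 : z 0 = 1 := by
      rw [hz_def]
      simp
    have hz_cont : ContinuousAt z 0 := by
      have h1 : Continuous fun t : ℝ => (1 : A) + ((t : ℝ) : ℂ) • x :=
        continuous_const.add (Complex.continuous_ofReal.smul continuous_const)
      have h2 : ContinuousAt Ring.inverse
          ((fun t : ℝ => (1 : A) + ((t : ℝ) : ℂ) • x) 0) := by
        simpa using NormedRing.inverse_continuousAt (1 : Aˣ)
      exact ContinuousAt.comp (f := fun t : ℝ => (1 : A) + ((t : ℝ) : ℂ) • x)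
        (x := (0 : ℝ)) h2 h1.continuousAt
    have hEq : ∀ t : ℝ, |t| < ε →
        S (z t) * (p + ((t : ℝ) : ℂ) • Tx) = p ∧ (p + ((t : ℝ) : ℂ) • Tx) * S (z t) = p := by
      intro t ht
      have hb : star (star ((1 : A) + ((t : ℝ) : ℂ) • x)) = (1 : A) + ((t : ℝ) : ℂ) • x :=
        star_star _
      obtain ⟨q1, q2⟩ := h (z t) (star ((1 : A) + ((t : ℝ) : ℂ) • x))
        (by rw [hb]; exact hz_l t ht) (by rw [hb]; exact hz_r t ht)
      have he : star ((1 : A) + ((t : ℝ) : ℂ) • x) = (1 : A) + ((t : ℝ) : ℂ) • star x := by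
        rw [star_add, star_one, star_smul, Complex.star_def, Complex.conj_ofReal]
      have hSb : star (S (star ((1 : A) + ((t : ℝ) : ℂ) • x))) = p + ((t : ℝ) : ℂ) • Tx := by
        rw [he, map_add, map_smul, star_add, star_smul, Complex.star_def,
          Complex.conj_ofReal, ← hp_def, hpstar, ← hTx]
      rw [hSb] at q1 q2
      exact ⟨q1, q2⟩
    have hz1 : ∀ t : ℝ, |t| < ε → z t = 1 - ((t : ℝ) : ℂ) • (x * z t) := by
      intro t ht
      have h1 := hz_r t ht
      rw [add_mul, one_mul, smul_mul_assoc] at h1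
      exact eq_sub_of_add_eq h1
    have hz2 : ∀ t : ℝ, |t| < ε → z t
        = 1 - ((t : ℝ) : ℂ) • x + (((t : ℝ) : ℂ) * ((t : ℝ) : ℂ)) • (x * (x * z t)) := by
      intro t ht
      have h1 := hz1 t ht
      have h2 : x * z t = x - ((t : ℝ) : ℂ) • (x * (x * z t)) := by
        conv_lhs => rw [h1]
        rw [mul_sub, mul_one, mul_smul_comm]
      conv_lhs => rw [h1, h2]
      simp only [smul_sub, smul_smul]
      module
    -- first-order relation (a1)
    have ha1 : Tx * p = p * S x := by
      have hGz : ∀ t : ℝ, |t| < ε → t ≠ 0 →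
          Tx * p - p * S (x * z t) - ((t : ℝ) : ℂ) • (Tx * S (x * z t)) = 0 := by
        intro t ht ht0
        have hq := (hEq t ht).2
        have hSz : S (z t) = p - ((t : ℝ) : ℂ) • S (x * z t) := by
          conv_lhs => rw [hz1 t ht]
          rw [map_sub, map_smul, ← hp_def]
        rw [hSz] at hq
        have hexp : (p + ((t : ℝ) : ℂ) • Tx) * (p - ((t : ℝ) : ℂ) • S (x * z t))
            = p * p + ((t : ℝ) : ℂ) •
              (Tx * p - p * S (x * z t) - ((t : ℝ) : ℂ) • (Tx * S (x * z t))) := by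
          simp only [mul_sub, add_mul, sub_mul, mul_add, smul_mul_assoc, mul_smul_comm,
            smul_smul, smul_sub, smul_add]
          module
        rw [hexp, hpp] at hq
        have h7 : ((t : ℝ) : ℂ) •
            (Tx * p - p * S (x * z t) - ((t : ℝ) : ℂ) • (Tx * S (x * z t))) = 0 := by
          have h8 : ((t : ℝ) : ℂ) •
              (Tx * p - p * S (x * z t) - ((t : ℝ) : ℂ) • (Tx * S (x * z t)))
              = (p + ((t : ℝ) : ℂ) •
                (Tx * p - p * S (x * z t) - ((t : ℝ) : ℂ) • (Tx * S (x * z t)))) - p := by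
            abel
          rw [h8, hq, sub_self]
        have ht0' : ((t : ℝ) : ℂ) ≠ 0 := Complex.ofReal_ne_zero.mpr ht0
        exact (smul_eq_zero.mp h7).resolve_left ht0'
      have hc1 : ContinuousAt (fun t : ℝ => S (x * z t)) 0 :=
        hcont.continuousAt.comp (continuousAt_const.mul hz_cont)
      have hG : ContinuousAt (fun t : ℝ =>
          Tx * p - p * S (x * z t) - ((t : ℝ) : ℂ) • (Tx * S (x * z t))) 0 := by
        apply ContinuousAt.sub
        · exact ContinuousAt.sub continuousAt_const (continuousAt_const.mul hc1)
        · exact (Complex.continuous_ofReal.continuousAt).smul (continuousAt_const.mul hc1)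
      have h0 := aux_limit hG hε hGz
      have h0' : Tx * p - p * S x = 0 := by
        simpa [hz0] using h0
      exact sub_eq_zero.mp h0'
    -- first-order relation (a2)
    have ha2 : p * Tx = S x * p := by
      have hGz : ∀ t : ℝ, |t| < ε → t ≠ 0 →
          p * Tx - S (x * z t) * p - ((t : ℝ) : ℂ) • (S (x * z t) * Tx) = 0 := by
        intro t ht ht0
        have hq := (hEq t ht).1
        have hSz : S (z t) = p - ((t : ℝ) : ℂ) • S (x * z t) := by
          conv_lhs => rw [hz1 t ht]
          rw [map_sub, map_smul, ← hp_def]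
        rw [hSz] at hq
        have hexp : (p - ((t : ℝ) : ℂ) • S (x * z t)) * (p + ((t : ℝ) : ℂ) • Tx)
            = p * p + ((t : ℝ) : ℂ) •
              (p * Tx - S (x * z t) * p - ((t : ℝ) : ℂ) • (S (x * z t) * Tx)) := by
          simp only [mul_sub, add_mul, sub_mul, mul_add, smul_mul_assoc, mul_smul_comm,
            smul_smul, smul_sub, smul_add]
          module
        rw [hexp, hpp] at hq
        have h7 : ((t : ℝ) : ℂ) •
            (p * Tx - S (x * z t) * p - ((t : ℝ) : ℂ) • (S (x * z t) * Tx)) = 0 := by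
          have h8 : ((t : ℝ) : ℂ) •
              (p * Tx - S (x * z t) * p - ((t : ℝ) : ℂ) • (S (x * z t) * Tx))
              = (p + ((t : ℝ) : ℂ) •
                (p * Tx - S (x * z t) * p - ((t : ℝ) : ℂ) • (S (x * z t) * Tx))) - p := by
            abel
          rw [h8, hq, sub_self]
        have ht0' : ((t : ℝ) : ℂ) ≠ 0 := Complex.ofReal_ne_zero.mpr ht0
        exact (smul_eq_zero.mp h7).resolve_left ht0'
      have hc1 : ContinuousAt (fun t : ℝ => S (x * z t)) 0 :=
        hcont.continuousAt.comp (continuousAt_const.mul hz_cont)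
      have hG : ContinuousAt (fun t : ℝ =>
          p * Tx - S (x * z t) * p - ((t : ℝ) : ℂ) • (S (x * z t) * Tx)) 0 := by
        apply ContinuousAt.sub
        · exact ContinuousAt.sub continuousAt_const (hc1.mul continuousAt_const)
        · exact (Complex.continuous_ofReal.continuousAt).smul (hc1.mul continuousAt_const)
      have h0 := aux_limit hG hε hGz
      have h0' : p * Tx - S x * p = 0 := by
        simpa [hz0] using h0
      exact sub_eq_zero.mp h0'
    -- second-order relation (b)
    have hb : S (x * x) * p = S x * Tx := by
      have hGz : ∀ t : ℝ, |t| < ε → t ≠ 0 →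
          S (x * (x * z t)) * p - S x * Tx
            + ((t : ℝ) : ℂ) • (S (x * (x * z t)) * Tx) = 0 := by
        intro t ht ht0
        have hq := (hEq t ht).1
        have hSz : S (z t) = p - ((t : ℝ) : ℂ) • S x
            + (((t : ℝ) : ℂ) * ((t : ℝ) : ℂ)) • S (x * (x * z t)) := by
          conv_lhs => rw [hz2 t ht]
          rw [map_add, map_sub, map_smul, map_smul, ← hp_def]
        rw [hSz] at hq
        have hexp : (p - ((t : ℝ) : ℂ) • S x
              + (((t : ℝ) : ℂ) * ((t : ℝ) : ℂ)) • S (x * (x * z t)))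
              * (p + ((t : ℝ) : ℂ) • Tx)
            = p * p + ((t : ℝ) : ℂ) • (p * Tx) - ((t : ℝ) : ℂ) • (S x * p)
              + (((t : ℝ) : ℂ) * ((t : ℝ) : ℂ)) •
                (S (x * (x * z t)) * p - S x * Tx
                  + ((t : ℝ) : ℂ) • (S (x * (x * z t)) * Tx)) := by
          simp only [mul_sub, add_mul, sub_mul, mul_add, smul_mul_assoc, mul_smul_comm,
            smul_smul, smul_sub, smul_add]
          module
        rw [hexp, hpp, ha2] at hq
        have h7 : (((t : ℝ) : ℂ) * ((t : ℝ) : ℂ)) •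
            (S (x * (x * z t)) * p - S x * Tx
              + ((t : ℝ) : ℂ) • (S (x * (x * z t)) * Tx)) = 0 := by
          have h8 : (((t : ℝ) : ℂ) * ((t : ℝ) : ℂ)) •
              (S (x * (x * z t)) * p - S x * Tx
                + ((t : ℝ) : ℂ) • (S (x * (x * z t)) * Tx))
              = (p + ((t : ℝ) : ℂ) • (S x * p) - ((t : ℝ) : ℂ) • (S x * p)
                + (((t : ℝ) : ℂ) * ((t : ℝ) : ℂ)) •
                  (S (x * (x * z t)) * p - S x * Tx
                    + ((t : ℝ) : ℂ) • (S (x * (x * z t)) * Tx))) - p := by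
            abel
          rw [h8, hq, sub_self]
        have ht0' : ((t : ℝ) : ℂ) * ((t : ℝ) : ℂ) ≠ 0 :=
          mul_ne_zero (Complex.ofReal_ne_zero.mpr ht0) (Complex.ofReal_ne_zero.mpr ht0)
        exact (smul_eq_zero.mp h7).resolve_left ht0'
      have hc1 : ContinuousAt (fun t : ℝ => S (x * (x * z t))) 0 :=
        hcont.continuousAt.comp (continuousAt_const.mul (continuousAt_const.mul hz_cont))
      have hG : ContinuousAt (fun t : ℝ =>
          S (x * (x * z t)) * p - S x * Tx
            + ((t : ℝ) : ℂ) • (S (x * (x * z t)) * Tx)) 0 := by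
        apply ContinuousAt.add
        · exact ContinuousAt.sub (hc1.mul continuousAt_const) continuousAt_const
        · exact (Complex.continuous_ofReal.continuousAt).smul (hc1.mul continuousAt_const)
      have h0 := aux_limit hG hε hGz
      have h0' : S (x * x) * p - S x * Tx = 0 := by
        simpa [hz0] using h0
      exact sub_eq_zero.mp h0'
    exact ⟨ha1, ha2, hb⟩
  -- conclusion
  have hT : ∀ a : A, star (S (star a)) = S a := by
    intro a
    obtain ⟨ha1, _, _⟩ := hTrel a
    have h1 : S (star a) = p * S (star a) := (hproj (star a)).1.symm
    have h2 : star (S (star a)) = star (S (star a)) * p := by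
      conv_lhs => rw [h1]
      rw [star_mul, hpstar]
    rw [h2, ha1, (hproj a).1]
  constructor
  · intro a
    have := hT a
    rw [← this, star_star]
  · intro a
    obtain ⟨_, _, hb⟩ := hTrel a
    have h1 : S (a * a) = S (a * a) * p := (hproj (a * a)).2.symm
    rw [h1, hb, hT a]
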